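/- Let ν_r denote the uniform distribution on the circle of radius r in ℝ², μ the uniform distribution on the unit circle, and ν^{(R)} = (ν_{1/2} + ν_R)/2. Then ν^{(R)} dominates μ in convex order if and only if R ≥ 3/2. -/

import Mathlib

open MeasureTheory Set
open scoped ENNReal

noncomputable section

/-- The uniform distribution on the circle of radius `r` in `ℝ²`. -/
def circleUniform (r : ℝ) : Measure (EuclideanSpace ℝ (Fin 2)) :=
  Measure.map (fun θ : ℝ => (WithLp.toLp 2 (r • ![Real.cos θ, Real.sin θ]) : EuclideanSpace ℝ (Fin 2)))
    ((ENNReal.ofReal (2 * Real.pi))⁻¹ • volume.restrict (Set.Ico 0 (2 * Real.pi)))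

namespace CircleConvexAux

open Real

def pt (r θ : ℝ) : EuclideanSpace ℝ (Fin 2) := WithLp.toLp 2 (r • ![Real.cos θ, Real.sin θ])

lemma circleUniform_eq (r : ℝ) : circleUniform r =
    Measure.map (fun θ : ℝ => pt r θ)
      ((ENNReal.ofReal (2 * Real.pi))⁻¹ • volume.restrict (Set.Ico 0 (2 * Real.pi))) := rfl

lemma cont_pt (r : ℝ) : Continuous (fun θ : ℝ => pt r θ) := by
  unfold pt
  apply (PiLp.continuous_toLp 2 _).comp
  refine Continuous.smul (f := fun _ : ℝ => r) continuous_const ?_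
  exact continuous_pi fun i => by fin_cases i <;> simp [Real.continuous_cos, Real.continuous_sin]

lemma circleUniform_integral (r : ℝ) (f : EuclideanSpace ℝ (Fin 2) → ℝ) (hf : Continuous f) :
    ∫ x, f x ∂(circleUniform r) = (2 * π)⁻¹ * ∫ θ in (0:ℝ)..(2*π), f (pt r θ) := by
  rw [circleUniform_eq, integral_map ((cont_pt r).aemeasurable) hf.aestronglyMeasurable,
    integral_smul_measure]
  rw [ENNReal.toReal_inv, ENNReal.toReal_ofReal (by positivity)]
  rw [intervalIntegral.integral_of_le (by positivity), ← MeasureTheory.integral_Icc_eq_integral_Ico,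
    MeasureTheory.integral_Icc_eq_integral_Ioc]
  simp [pt, smul_eq_mul]

lemma integrable_circleUniform (r : ℝ) (f : EuclideanSpace ℝ (Fin 2) → ℝ) (hf : Continuous f) :
    Integrable f (circleUniform r) := by
  rw [circleUniform_eq, integrable_map_measure hf.aestronglyMeasurable (cont_pt r).aemeasurable]
  refine Integrable.smul_measure ?_ (by simp [Real.pi_pos, Real.two_pi_pos.ne'])
  exact ((hf.comp (cont_pt r)).integrableOn_Icc).mono_set Ico_subset_Icc_self

lemma norm_pt (r θ : ℝ) : ‖pt r θ‖ = |r| := by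
  rw [EuclideanSpace.norm_eq]
  simp only [pt, PiLp.toLp_apply, PiLp.smul_apply, Pi.smul_apply, Matrix.smul_cons, Matrix.smul_empty,
    smul_eq_mul, Fin.sum_univ_two, Matrix.cons_val_zero,
    Matrix.cons_val_one, Matrix.head_cons, Real.norm_eq_abs, sq_abs, mul_pow, ← mul_add,
    Real.cos_sq_add_sin_sq, mul_one, Real.sqrt_sq_eq_abs]

lemma translate_integral (R α : ℝ) (f : EuclideanSpace ℝ (Fin 2) → ℝ) :
    ∫ θ in (0:ℝ)..(2*π), f (pt R (θ + α)) = ∫ θ in (0:ℝ)..(2*π), f (pt R θ) := by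
  have hper : Function.Periodic (fun θ => f (pt R θ)) (2*π) := fun x => by
    simp [pt, Real.cos_add_two_pi, Real.sin_add_two_pi]
  calc ∫ θ in (0:ℝ)..(2*π), f (pt R (θ+α))
      = ∫ θ in (0+α)..(2*π+α), f (pt R θ) := intervalIntegral.integral_comp_add_right (fun θ => f (pt R θ)) α
    _ = ∫ θ in α..(α+2*π), f (pt R θ) := by rw [zero_add, add_comm]
    _ = ∫ θ in (0:ℝ)..(0+2*π), f (pt R θ) := hper.intervalIntegral_add_eq α 0
    _ = _ := by rw [zero_add]

end CircleConvexAux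

open CircleConvexAux Real

/-- With `μ` uniform on the unit circle and `ν^{(R)} = (ν_{1/2} + ν_R)/2` (uniform
distributions on the circles of radii `1/2` and `R > 0`), `ν^{(R)}` dominates `μ` in
convex order if and only if `R ≥ 3/2`. -/
theorem circle_convex_order_iff (R : ℝ) (hR : 0 < R) :
    (∀ f : EuclideanSpace ℝ (Fin 2) → ℝ, ConvexOn ℝ Set.univ f →
      ∫ x, f x ∂(circleUniform 1)
        ≤ ∫ y, f y ∂((2 : ℝ≥0∞)⁻¹ • (circleUniform (1/2) + circleUniform R)))
    ↔ 3/2 ≤ R := by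
  have hπ : (0:ℝ) < 2 * π := Real.two_pi_pos
  have normint : ∀ r : ℝ, ∫ x, ‖x‖ ∂(circleUniform r) = |r| := by
    intro r
    rw [circleUniform_integral r _ continuous_norm]
    have : ∀ θ : ℝ, ‖pt r θ‖ = |r| := norm_pt r
    rw [intervalIntegral.integral_congr (fun θ _ => this θ)]
    rw [intervalIntegral.integral_const]
    simp only [sub_zero, smul_eq_mul]
    field_simp
  constructor
  · intro h
    have key := h (fun x => ‖x‖) convexOn_univ_norm
    rw [integral_smul_measure, integral_add_measure (integrable_circleUniform _ _ continuous_norm)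
      (integrable_circleUniform _ _ continuous_norm)] at key
    simp only [normint] at key
    rw [abs_one, abs_of_pos hR, abs_of_pos (by norm_num : (0:ℝ) < 1/2)] at key
    have h2 : ((2:ℝ≥0∞)⁻¹).toReal = (1:ℝ)/2 := by simp
    rw [h2] at key
    simp only [smul_eq_mul] at key
    linarith
  · intro hR32 f hf
    have hfc : Continuous f := hf.locallyLipschitz.continuous
    set α := Real.arccos (3 / (2 * R)) with hα
    have hcos : Real.cos α = 3 / (2 * R) := by
      apply Real.cos_arccos
      · have : (0:ℝ) < 3 / (2 * R) := by positivity
        linarith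
      · rw [div_le_one (by positivity)]; linarith
    -- vector identities
    have hid1 : ∀ θ, pt 1 θ = (1/2:ℝ) • pt (1/2) θ + (1/2:ℝ) • pt (3/2) θ := by
      intro θ
      ext i
      fin_cases i <;>
        simp [pt, PiLp.smul_apply, PiLp.add_apply, Matrix.cons_val_zero, Matrix.cons_val_one,
          Matrix.head_cons, smul_eq_mul] <;> ring
    have hid2 : ∀ θ, pt (3/2) θ = (1/2:ℝ) • pt R (θ + α) + (1/2:ℝ) • pt R (θ + (-α)) := by
      intro θ
      ext i
      have hR' : R ≠ 0 := hR.ne'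
      fin_cases i <;>
        · simp only [pt, PiLp.toLp_apply, Pi.smul_apply, Fin.zero_eta, Fin.mk_one, PiLp.smul_apply, PiLp.add_apply, Matrix.cons_val_zero, Matrix.cons_val_one,
            Matrix.head_cons, smul_eq_mul, Matrix.cons_val', Matrix.cons_val_fin_one,
            Matrix.empty_val']
          simp only [show θ + -α = θ - α by ring, Real.cos_add, Real.cos_sub, Real.sin_add, Real.sin_sub]
          · rw [hcos]; field_simp; ring
    -- pointwise bound
    have hpt : ∀ θ, f (pt 1 θ) ≤
        (1/2:ℝ) * f (pt (1/2) θ) + (1/4:ℝ) * f (pt R (θ + α)) + (1/4:ℝ) * f (pt R (θ + (-α))) := by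
      intro θ
      have c1 : f (pt 1 θ) ≤ (1/2:ℝ) * f (pt (1/2) θ) + (1/2:ℝ) * f (pt (3/2) θ) := by
        have := hf.2 (mem_univ (pt (1/2) θ)) (mem_univ (pt (3/2) θ))
          (by norm_num : (0:ℝ) ≤ 1/2) (by norm_num : (0:ℝ) ≤ 1/2) (by norm_num)
        rw [← hid1 θ] at this
        simpa [smul_eq_mul] using this
      have c2 : f (pt (3/2) θ) ≤ (1/2:ℝ) * f (pt R (θ + α)) + (1/2:ℝ) * f (pt R (θ + (-α))) := by
        have := hf.2 (mem_univ (pt R (θ + α))) (mem_univ (pt R (θ + (-α))))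
          (by norm_num : (0:ℝ) ≤ 1/2) (by norm_num : (0:ℝ) ≤ 1/2) (by norm_num)
        rw [← hid2 θ] at this
        simpa [smul_eq_mul] using this
      linarith
    -- integrate
    have icont : ∀ (r β : ℝ), Continuous fun θ : ℝ => f (pt r (θ + β)) := fun r β =>
      hfc.comp ((cont_pt r).comp (continuous_id.add continuous_const))
    have iint : ∀ (r β : ℝ), IntervalIntegrable (fun θ : ℝ => f (pt r (θ + β)))
        volume 0 (2*π) := fun r β => (icont r β).intervalIntegrable _ _
    have iint0 : ∀ r : ℝ, IntervalIntegrable (fun θ : ℝ => f (pt r θ)) volume 0 (2*π) := by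
      intro r; simpa using iint r 0
    have Imono : ∫ θ in (0:ℝ)..(2*π), f (pt 1 θ) ≤
        ∫ θ in (0:ℝ)..(2*π), ((1/2:ℝ) * f (pt (1/2) θ) + (1/4:ℝ) * f (pt R (θ + α))
          + (1/4:ℝ) * f (pt R (θ + (-α)))) := by
      apply intervalIntegral.integral_mono_on hπ.le (iint0 1)
      · exact (((iint0 (1/2)).const_mul _).add ((iint R α).const_mul _)).add
          ((iint R (-α)).const_mul _)
      · intro θ _; exact hpt θ
    rw [intervalIntegral.integral_add (((iint0 (1/2)).const_mul _).add ((iint R α).const_mul _))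
      ((iint R (-α)).const_mul _),
      intervalIntegral.integral_add ((iint0 (1/2)).const_mul _) ((iint R α).const_mul _),
      intervalIntegral.integral_const_mul, intervalIntegral.integral_const_mul,
      intervalIntegral.integral_const_mul, translate_integral R α f,
      translate_integral R (-α) f] at Imono
    -- assemble
    rw [circleUniform_integral 1 f hfc, integral_smul_measure,
      integral_add_measure (integrable_circleUniform _ _ hfc) (integrable_circleUniform _ _ hfc),
      circleUniform_integral (1/2) f hfc, circleUniform_integral R f hfc]
    have h2 : ((2:ℝ≥0∞)⁻¹).toReal = (1:ℝ)/2 := by simp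
    rw [h2, smul_eq_mul]
    have hπi : (0:ℝ) < (2*π)⁻¹ := by positivity
    set I1 := ∫ θ in (0:ℝ)..(2*π), f (pt 1 θ)
    set Ih := ∫ θ in (0:ℝ)..(2*π), f (pt (1/2) θ)
    set IR := ∫ θ in (0:ℝ)..(2*π), f (pt R θ)
    have : I1 ≤ (1/2) * Ih + (1/2) * IR := by linarith
    nlinarith [mul_le_mul_of_nonneg_left this hπi.le]
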